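/- Lower bound for isotopies between concentric circles: every C^1 isotopy Γ : S^1 × [0,1] → ℝ³ with Γ(s,0) = (cos s, sin s, 0) and Γ(s,1) = R(cos s, sin s, 0), R ≥ 1, satisfies A(Γ) ≥ π(R² − 1). -/

import Mathlib

open Real MeasureTheory

noncomputable def cross3 (u v : Fin 3 → ℝ) : EuclideanSpace ℝ (Fin 3) :=
  WithLp.toLp 2 ![u 1 * v 2 - u 2 * v 1, u 2 * v 0 - u 0 * v 2, u 0 * v 1 - u 1 * v 0]

noncomputable def partialS (Γ : ℝ → ℝ → EuclideanSpace ℝ (Fin 3)) (s t : ℝ) :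
    EuclideanSpace ℝ (Fin 3) :=
  deriv (fun x => Γ x t) s

noncomputable def partialT (Γ : ℝ → ℝ → EuclideanSpace ℝ (Fin 3)) (s t : ℝ) :
    EuclideanSpace ℝ (Fin 3) :=
  deriv (fun y => Γ s y) t

/-- Swept area of an isotopy, with circle variable `s ∈ [0, 2π]` and time `t ∈ [0,1]`. -/
noncomputable def sweptArea (Γ : ℝ → ℝ → EuclideanSpace ℝ (Fin 3)) : ℝ :=
  ∫ t in (0:ℝ)..1, ∫ s in (0:ℝ)..(2 * π),
    ‖cross3 (partialS Γ s t) (partialT Γ s t)‖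

open intervalIntegral Filter Topology

section
variable {Γ : ℝ → ℝ → EuclideanSpace ℝ (Fin 3)} (hΓ : ContDiff ℝ 1 (Function.uncurry Γ))
include hΓ

lemma hasDerivAt_S (s t : ℝ) :
    HasDerivAt (fun x => Γ x t) (fderiv ℝ (Function.uncurry Γ) (s, t) (1, 0)) s := by
  have hf : HasFDerivAt (Function.uncurry Γ) (fderiv ℝ (Function.uncurry Γ) (s, t)) (s, t) :=
    (hΓ.differentiable one_ne_zero (s, t)).hasFDerivAt
  have hc : HasDerivAt (fun x : ℝ => (x, t)) ((1 : ℝ), (0 : ℝ)) s :=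
    (hasDerivAt_id s).prodMk (hasDerivAt_const s t)
  exact hf.comp_hasDerivAt s hc

lemma hasDerivAt_T (s t : ℝ) :
    HasDerivAt (fun y => Γ s y) (fderiv ℝ (Function.uncurry Γ) (s, t) (0, 1)) t := by
  have hf : HasFDerivAt (Function.uncurry Γ) (fderiv ℝ (Function.uncurry Γ) (s, t)) (s, t) :=
    (hΓ.differentiable one_ne_zero (s, t)).hasFDerivAt
  have hc : HasDerivAt (fun y : ℝ => (s, y)) ((0 : ℝ), (1 : ℝ)) t :=
    (hasDerivAt_const t s).prodMk (hasDerivAt_id t)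
  exact hf.comp_hasDerivAt t hc

lemma partialS_eq (s t : ℝ) : partialS Γ s t = fderiv ℝ (Function.uncurry Γ) (s, t) (1, 0) :=
  (hasDerivAt_S hΓ s t).deriv

lemma partialT_eq (s t : ℝ) : partialT Γ s t = fderiv ℝ (Function.uncurry Γ) (s, t) (0, 1) :=
  (hasDerivAt_T hΓ s t).deriv

lemma hasDerivAt_S' (s t : ℝ) : HasDerivAt (fun x => Γ x t) (partialS Γ s t) s := by
  rw [partialS_eq hΓ]; exact hasDerivAt_S hΓ s t

lemma hasDerivAt_T' (s t : ℝ) : HasDerivAt (fun y => Γ s y) (partialT Γ s t) t := by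
  rw [partialT_eq hΓ]; exact hasDerivAt_T hΓ s t

lemma hasDerivAt_S_comp (s t : ℝ) (i : Fin 3) :
    HasDerivAt (fun x => Γ x t i) (partialS Γ s t i) s := by
  have h : HasDerivAt (fun x => (EuclideanSpace.proj (𝕜 := ℝ) i) (Γ x t))
      ((EuclideanSpace.proj (𝕜 := ℝ) i) (partialS Γ s t)) s :=
    ((EuclideanSpace.proj (𝕜 := ℝ) i).hasFDerivAt).comp_hasDerivAt s (hasDerivAt_S' hΓ s t)
  simpa using h

lemma hasDerivAt_T_comp (s t : ℝ) (i : Fin 3) :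
    HasDerivAt (fun y => Γ s y i) (partialT Γ s t i) t := by
  have h : HasDerivAt (fun y => (EuclideanSpace.proj (𝕜 := ℝ) i) (Γ s y))
      ((EuclideanSpace.proj (𝕜 := ℝ) i) (partialT Γ s t)) t :=
    ((EuclideanSpace.proj (𝕜 := ℝ) i).hasFDerivAt).comp_hasDerivAt t (hasDerivAt_T' hΓ s t)
  simpa using h

lemma contS : Continuous (fun p : ℝ × ℝ => partialS Γ p.1 p.2) := by
  have : (fun p : ℝ × ℝ => partialS Γ p.1 p.2)
      = fun p : ℝ × ℝ => fderiv ℝ (Function.uncurry Γ) p ((1 : ℝ), (0 : ℝ)) := by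
    funext p; exact partialS_eq hΓ p.1 p.2
  rw [this]
  exact (hΓ.continuous_fderiv one_ne_zero).clm_apply continuous_const

lemma contT : Continuous (fun p : ℝ × ℝ => partialT Γ p.1 p.2) := by
  have : (fun p : ℝ × ℝ => partialT Γ p.1 p.2)
      = fun p : ℝ × ℝ => fderiv ℝ (Function.uncurry Γ) p ((0 : ℝ), (1 : ℝ)) := by
    funext p; exact partialT_eq hΓ p.1 p.2
  rw [this]
  exact (hΓ.continuous_fderiv one_ne_zero).clm_apply continuous_const

lemma contS_comp (i : Fin 3) : Continuous (fun p : ℝ × ℝ => partialS Γ p.1 p.2 i) :=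
  ((EuclideanSpace.proj (𝕜 := ℝ) i).continuous).comp (contS hΓ)

lemma contT_comp (i : Fin 3) : Continuous (fun p : ℝ × ℝ => partialT Γ p.1 p.2 i) :=
  ((EuclideanSpace.proj (𝕜 := ℝ) i).continuous).comp (contT hΓ)

lemma contΓ_comp (i : Fin 3) : Continuous (fun p : ℝ × ℝ => Γ p.1 p.2 i) :=
  ((EuclideanSpace.proj (𝕜 := ℝ) i).continuous).comp (by exact hΓ.continuous)

end

noncomputable def Afun (Γ : ℝ → ℝ → EuclideanSpace ℝ (Fin 3)) : ℝ → ℝ :=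
  fun t => ∫ s in (0:ℝ)..(2*π), Γ s t 0 * partialS Γ s t 1

noncomputable def Dfun (Γ : ℝ → ℝ → EuclideanSpace ℝ (Fin 3)) : ℝ → ℝ :=
  fun t => ∫ s in (0:ℝ)..(2*π),
    (partialT Γ s t 0 * partialS Γ s t 1 - partialS Γ s t 0 * partialT Γ s t 1)

section
variable {Γ : ℝ → ℝ → EuclideanSpace ℝ (Fin 3)} (hΓ : ContDiff ℝ 1 (Function.uncurry Γ))
include hΓ

lemma contΓ_s (u : ℝ) (i : Fin 3) : Continuous fun s => Γ s u i :=
  (contΓ_comp hΓ i).comp (continuous_id.prodMk continuous_const)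

lemma contS_s (u : ℝ) (i : Fin 3) : Continuous fun s => partialS Γ s u i :=
  (contS_comp hΓ i).comp (continuous_id.prodMk continuous_const)

lemma contT_s (u : ℝ) (i : Fin 3) : Continuous fun s => partialT Γ s u i :=
  (contT_comp hΓ i).comp (continuous_id.prodMk continuous_const)

lemma contS_t (s : ℝ) (i : Fin 3) : Continuous fun u => partialS Γ s u i :=
  (contS_comp hΓ i).comp (continuous_const.prodMk continuous_id)

lemma contT_t (s : ℝ) (i : Fin 3) : Continuous fun u => partialT Γ s u i :=
  (contT_comp hΓ i).comp (continuous_const.prodMk continuous_id)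

lemma stepA (hper : ∀ s t, Γ (s + 2 * π) t = Γ s t) (t t' : ℝ) :
    Afun Γ t' - Afun Γ t = ∫ s in (0:ℝ)..(2*π), ∫ τ in t..t',
      (partialT Γ s τ 0 * partialS Γ s t' 1 - partialS Γ s t 0 * partialT Γ s τ 1) := by
  have per0 : ∀ u : ℝ, Γ (2*π) u = Γ 0 u := by
    intro u; have := hper 0 u; simpa using this
  -- the exact-derivative integral vanishes
  have hZ : (∫ s in (0:ℝ)..(2*π),
      (partialS Γ s t 0 * (Γ s t' 1 - Γ s t 1)
        + Γ s t 0 * (partialS Γ s t' 1 - partialS Γ s t 1))) = 0 := by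
    have hder : ∀ s ∈ Set.uIcc (0:ℝ) (2*π),
        HasDerivAt (fun σ => Γ σ t 0 * (Γ σ t' 1 - Γ σ t 1))
          (partialS Γ s t 0 * (Γ s t' 1 - Γ s t 1)
            + Γ s t 0 * (partialS Γ s t' 1 - partialS Γ s t 1)) s := by
      intro s _
      exact (hasDerivAt_S_comp hΓ s t 0).mul
        ((hasDerivAt_S_comp hΓ s t' 1).sub (hasDerivAt_S_comp hΓ s t 1))
    have hint : IntervalIntegrable (fun s => partialS Γ s t 0 * (Γ s t' 1 - Γ s t 1)
        + Γ s t 0 * (partialS Γ s t' 1 - partialS Γ s t 1)) volume 0 (2*π) :=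
      (((contS_s hΓ t 0).mul ((contΓ_s hΓ t' 1).sub (contΓ_s hΓ t 1))).add
        ((contΓ_s hΓ t 0).mul ((contS_s hΓ t' 1).sub (contS_s hΓ t 1)))).intervalIntegrable _ _
    rw [integral_eq_sub_of_hasDerivAt hder hint, per0 t, per0 t']
    ring
  have hsub : Afun Γ t' - Afun Γ t = ∫ s in (0:ℝ)..(2*π),
      (Γ s t' 0 * partialS Γ s t' 1 - Γ s t 0 * partialS Γ s t 1) := by
    rw [integral_sub (f := fun s => Γ s t' 0 * partialS Γ s t' 1)
      (g := fun s => Γ s t 0 * partialS Γ s t 1)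
      (((contΓ_s hΓ t' 0).mul (contS_s hΓ t' 1)).intervalIntegrable _ _)
      (((contΓ_s hΓ t 0).mul (contS_s hΓ t 1)).intervalIntegrable _ _)]
    rfl
  have hsplit : Afun Γ t' - Afun Γ t = ∫ s in (0:ℝ)..(2*π),
      ((Γ s t' 0 - Γ s t 0) * partialS Γ s t' 1
        - partialS Γ s t 0 * (Γ s t' 1 - Γ s t 1)) := by
    rw [hsub]
    have : (fun s => Γ s t' 0 * partialS Γ s t' 1 - Γ s t 0 * partialS Γ s t 1)
        = fun s => ((Γ s t' 0 - Γ s t 0) * partialS Γ s t' 1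
            - partialS Γ s t 0 * (Γ s t' 1 - Γ s t 1))
          + (partialS Γ s t 0 * (Γ s t' 1 - Γ s t 1)
            + Γ s t 0 * (partialS Γ s t' 1 - partialS Γ s t 1)) := by
      funext s; ring
    rw [this, intervalIntegral.integral_add, hZ, add_zero]
    · exact ((((contΓ_s hΓ t' 0).sub (contΓ_s hΓ t 0)).mul (contS_s hΓ t' 1)).sub
        ((contS_s hΓ t 0).mul ((contΓ_s hΓ t' 1).sub (contΓ_s hΓ t 1)))).intervalIntegrable _ _
    · exact (((contS_s hΓ t 0).mul ((contΓ_s hΓ t' 1).sub (contΓ_s hΓ t 1))).add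
        ((contΓ_s hΓ t 0).mul ((contS_s hΓ t' 1).sub (contS_s hΓ t 1)))).intervalIntegrable _ _
  rw [hsplit]
  apply integral_congr
  intro s _
  show (Γ s t' 0 - Γ s t 0) * partialS Γ s t' 1 - partialS Γ s t 0 * (Γ s t' 1 - Γ s t 1)
      = ∫ τ in t..t', (partialT Γ s τ 0 * partialS Γ s t' 1 - partialS Γ s t 0 * partialT Γ s τ 1)
  have hx : Γ s t' 0 - Γ s t 0 = ∫ τ in t..t', partialT Γ s τ 0 :=
    (integral_eq_sub_of_hasDerivAt (fun τ _ => hasDerivAt_T_comp hΓ s τ 0)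
      ((contT_t hΓ s 0).intervalIntegrable _ _)).symm
  have hy : Γ s t' 1 - Γ s t 1 = ∫ τ in t..t', partialT Γ s τ 1 :=
    (integral_eq_sub_of_hasDerivAt (fun τ _ => hasDerivAt_T_comp hΓ s τ 1)
      ((contT_t hΓ s 1).intervalIntegrable _ _)).symm
  rw [hx, hy, ← intervalIntegral.integral_mul_const, ← intervalIntegral.integral_const_mul,
    ← integral_sub (f := fun τ => partialT Γ s τ 0 * partialS Γ s t' 1)
      (g := fun τ => partialS Γ s t 0 * partialT Γ s τ 1)
      (((contT_t hΓ s 0).mul continuous_const).intervalIntegrable _ _)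
      ((continuous_const.mul (contT_t hΓ s 1)).intervalIntegrable _ _)]

end

section
variable {Γ : ℝ → ℝ → EuclideanSpace ℝ (Fin 3)} (hΓ : ContDiff ℝ 1 (Function.uncurry Γ))
include hΓ

lemma hasDerivAt_A (hper : ∀ s t, Γ (s + 2 * π) t = Γ s t) (t : ℝ) :
    HasDerivAt (Afun Γ) (Dfun Γ t) t := by
  rw [hasDerivAt_iff_tendsto_slope]
  set F : ℝ → ℝ → ℝ := fun t' s => (t' - t)⁻¹ * ∫ τ in t..t',
    (partialT Γ s τ 0 * partialS Γ s t' 1 - partialS Γ s t 0 * partialT Γ s τ 1) with hF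
  have hslope : ∀ t', slope (Afun Γ) t t' = ∫ s in (0:ℝ)..(2*π), F t' s := by
    intro t'
    rw [slope_def_field, div_eq_inv_mul, stepA hΓ hper t t', ← intervalIntegral.integral_const_mul]
  -- the compact bound
  obtain ⟨M, hM⟩ : ∃ M : ℝ, ∀ p : ℝ × ℝ, p.1 ∈ Set.Icc (0:ℝ) (2*π) → p.2 ∈ Set.Icc (t-1) (t+1) →
      (|partialT Γ p.1 p.2 0| ≤ M ∧ |partialS Γ p.1 p.2 1| ≤ M ∧
        |partialS Γ p.1 p.2 0| ≤ M ∧ |partialT Γ p.1 p.2 1| ≤ M) := by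
    have hK : IsCompact ((Set.Icc (0:ℝ) (2*π)) ×ˢ (Set.Icc (t-1) (t+1))) :=
      isCompact_Icc.prod isCompact_Icc
    have hφ : Continuous fun p : ℝ × ℝ => |partialT Γ p.1 p.2 0| + |partialS Γ p.1 p.2 1|
        + |partialS Γ p.1 p.2 0| + |partialT Γ p.1 p.2 1| :=
      (((contT_comp hΓ 0).abs.add (contS_comp hΓ 1).abs).add (contS_comp hΓ 0).abs).add
        (contT_comp hΓ 1).abs
    obtain ⟨M, hM⟩ := hK.exists_bound_of_continuousOn hφ.continuousOn
    refine ⟨M, fun p h1 h2 => ?_⟩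
    have := hM p (Set.mk_mem_prod h1 h2)
    have hle : |partialT Γ p.1 p.2 0| + |partialS Γ p.1 p.2 1|
        + |partialS Γ p.1 p.2 0| + |partialT Γ p.1 p.2 1| ≤ M := le_trans (le_abs_self _) this
    refine ⟨?_, ?_, ?_, ?_⟩ <;> [skip; skip; skip; skip] <;>
      · nlinarith [abs_nonneg (partialT Γ p.1 p.2 0), abs_nonneg (partialS Γ p.1 p.2 1),
          abs_nonneg (partialS Γ p.1 p.2 0), abs_nonneg (partialT Γ p.1 p.2 1)]
  have hM0 : 0 ≤ M := by
    have := hM (0, t) ⟨le_refl 0, by positivity⟩ ⟨by linarith, by linarith⟩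
    exact le_trans (abs_nonneg _) this.1
  -- dominated convergence
  have key := intervalIntegral.tendsto_integral_filter_of_dominated_convergence
    (μ := volume) (a := (0:ℝ)) (b := 2*π) (l := nhdsWithin t {t}ᶜ) (F := F)
    (f := fun s => partialT Γ s t 0 * partialS Γ s t 1 - partialS Γ s t 0 * partialT Γ s t 1)
    (fun _ => 2 * (M * M))
    ?_ ?_ ?_ ?_
  · refine Tendsto.congr (fun t' => (hslope t').symm) key
  · -- measurability
    refine Filter.Eventually.of_forall (fun t' => ?_)
    have : Continuous (F t') := by
      apply Continuous.mul continuous_const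
      apply intervalIntegral.continuous_parametric_intervalIntegral_of_continuous'
      exact ((contT_comp hΓ 0).mul ((contS_comp hΓ 1).comp
          (continuous_fst.prodMk continuous_const))).sub
        (((contS_comp hΓ 0).comp (continuous_fst.prodMk continuous_const)).mul
          (contT_comp hΓ 1))
    exact this.aestronglyMeasurable
  · -- bound
    have hev : ∀ᶠ t' in 𝓝[≠] t, dist t' t ≤ 1 := by
      have : ∀ᶠ t' in 𝓝 t, dist t' t ≤ 1 :=
        Metric.eventually_nhds_iff.2 ⟨1, one_pos, fun {y} hy => le_of_lt (by simpa using hy)⟩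
      exact this.filter_mono nhdsWithin_le_nhds
    refine hev.mono (fun t' ht' => Filter.Eventually.of_forall (fun s hs => ?_))
    have hdist : |t' - t| ≤ 1 := by rwa [Real.dist_eq] at ht'
    have hsI : s ∈ Set.Icc (0:ℝ) (2*π) := by
      rcases Set.mem_uIoc.1 hs with h | h
      · exact ⟨le_of_lt h.1, h.2⟩
      · constructor
        · linarith [h.2, Real.pi_pos]
        · linarith [h.1, Real.pi_pos]
    have hbound : ∀ τ ∈ Set.uIoc t t',
        ‖partialT Γ s τ 0 * partialS Γ s t' 1 - partialS Γ s t 0 * partialT Γ s τ 1‖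
          ≤ 2 * (M * M) := by
      intro τ hτ
      have hτI : τ ∈ Set.Icc (t-1) (t+1) := by
        rcases Set.mem_uIoc.1 hτ with h | h
        · constructor <;> [linarith [h.1]; (have := abs_le.1 hdist; linarith [h.2, this.2])]
        · constructor <;> [(have := abs_le.1 hdist; linarith [h.2, this.1]); linarith [h.1]]
      have ht'I : t' ∈ Set.Icc (t-1) (t+1) := by
        have := abs_le.1 hdist; constructor <;> linarith [this.1, this.2]
      have htI : t ∈ Set.Icc (t-1) (t+1) := by constructor <;> linarith
      obtain ⟨a1, -, -, -⟩ := hM (s, τ) hsI hτI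
      obtain ⟨-, a2, -, -⟩ := hM (s, t') hsI ht'I
      obtain ⟨-, -, a3, -⟩ := hM (s, t) hsI htI
      obtain ⟨-, -, -, a4⟩ := hM (s, τ) hsI hτI
      have h1 : |partialT Γ s τ 0 * partialS Γ s t' 1| ≤ M * M := by
        rw [abs_mul]; exact mul_le_mul a1 a2 (abs_nonneg _) hM0
      have h2 : |partialS Γ s t 0 * partialT Γ s τ 1| ≤ M * M := by
        rw [abs_mul]; exact mul_le_mul a3 a4 (abs_nonneg _) hM0
      calc ‖partialT Γ s τ 0 * partialS Γ s t' 1 - partialS Γ s t 0 * partialT Γ s τ 1‖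
          ≤ |partialT Γ s τ 0 * partialS Γ s t' 1| + |partialS Γ s t 0 * partialT Γ s τ 1| :=
            abs_sub _ _
        _ ≤ 2 * (M * M) := by linarith
    have hint := intervalIntegral.norm_integral_le_of_norm_le_const hbound
    have key : ‖F t' s‖ ≤ |t' - t|⁻¹ * (2 * (M * M) * |t' - t|) := by
      simp only [hF, norm_mul, norm_inv, Real.norm_eq_abs]
      exact mul_le_mul_of_nonneg_left
        (by simpa [Real.norm_eq_abs] using hint) (by positivity)
    refine le_trans key ?_
    rcases eq_or_ne t' t with h | h
    · rw [h]; simp; positivity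
    · rw [mul_comm (2 * (M * M)) |t' - t|, ← mul_assoc, inv_mul_cancel₀ (by
        simpa [sub_eq_zero] using h : |t' - t| ≠ 0), one_mul]
  · exact intervalIntegrable_const
  · -- pointwise limit
    refine Filter.Eventually.of_forall (fun s _ => ?_)
    have hrepr : ∀ t', F t' s = partialS Γ s t' 1 * ((t' - t)⁻¹ * ∫ τ in t..t', partialT Γ s τ 0)
        - partialS Γ s t 0 * ((t' - t)⁻¹ * ∫ τ in t..t', partialT Γ s τ 1) := by
      intro t'
      simp only [hF]
      rw [integral_sub (f := fun τ => partialT Γ s τ 0 * partialS Γ s t' 1)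
        (g := fun τ => partialS Γ s t 0 * partialT Γ s τ 1)
        (((contT_t hΓ s 0).mul continuous_const).intervalIntegrable _ _)
        ((continuous_const.mul (contT_t hΓ s 1)).intervalIntegrable _ _),
        intervalIntegral.integral_mul_const, intervalIntegral.integral_const_mul]
      ring
    have hlim0 : Tendsto (fun t' => (t' - t)⁻¹ * ∫ τ in t..t', partialT Γ s τ 0)
        (𝓝[≠] t) (𝓝 (partialT Γ s t 0)) := by
      have hD : HasDerivAt (fun u => ∫ τ in t..u, partialT Γ s τ 0) (partialT Γ s t 0) t :=
        intervalIntegral.integral_hasDerivAt_right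
          ((contT_t hΓ s 0).intervalIntegrable _ _)
          ((contT_t hΓ s 0).stronglyMeasurableAtFilter _ _)
          (contT_t hΓ s 0).continuousAt
      rw [hasDerivAt_iff_tendsto_slope] at hD
      refine hD.congr (fun t' => ?_)
      rw [slope_def_field, intervalIntegral.integral_same, sub_zero, div_eq_inv_mul]
    have hlim1 : Tendsto (fun t' => (t' - t)⁻¹ * ∫ τ in t..t', partialT Γ s τ 1)
        (𝓝[≠] t) (𝓝 (partialT Γ s t 1)) := by
      have hD : HasDerivAt (fun u => ∫ τ in t..u, partialT Γ s τ 1) (partialT Γ s t 1) t :=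
        intervalIntegral.integral_hasDerivAt_right
          ((contT_t hΓ s 1).intervalIntegrable _ _)
          ((contT_t hΓ s 1).stronglyMeasurableAtFilter _ _)
          (contT_t hΓ s 1).continuousAt
      rw [hasDerivAt_iff_tendsto_slope] at hD
      refine hD.congr (fun t' => ?_)
      rw [slope_def_field, intervalIntegral.integral_same, sub_zero, div_eq_inv_mul]
    have hcont : Tendsto (fun t' => partialS Γ s t' 1) (𝓝[≠] t) (𝓝 (partialS Γ s t 1)) :=
      ((contS_t hΓ s 1).continuousAt.tendsto).mono_left nhdsWithin_le_nhds
    have hconst : Tendsto (fun _ : ℝ => partialS Γ s t 0) (𝓝[≠] t) (𝓝 (partialS Γ s t 0)) :=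
      tendsto_const_nhds
    have hfin := (hcont.mul hlim0).sub (hconst.mul hlim1)
    rw [mul_comm (partialS Γ s t 1) (partialT Γ s t 0)] at hfin
    exact Tendsto.congr (fun t' => (hrepr t').symm) hfin

end

lemma norm_cross3 (u v : Fin 3 → ℝ) : ‖cross3 u v‖ =
    Real.sqrt ((u 1 * v 2 - u 2 * v 1)^2 + (u 2 * v 0 - u 0 * v 2)^2
      + (u 0 * v 1 - u 1 * v 0)^2) := by
  rw [EuclideanSpace.norm_eq, Fin.sum_univ_three]
  congr 1
  simp [cross3, Real.norm_eq_abs, sq_abs]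

lemma cross3_lower (u v : Fin 3 → ℝ) :
    u 1 * v 0 - u 0 * v 1 ≤ ‖cross3 u v‖ := by
  rw [norm_cross3]
  have h1 : u 1 * v 0 - u 0 * v 1 ≤ |u 0 * v 1 - u 1 * v 0| := by
    rw [abs_sub_comm]; exact le_abs_self _
  refine le_trans h1 ?_
  rw [← Real.sqrt_sq_eq_abs]
  apply Real.sqrt_le_sqrt
  nlinarith [sq_nonneg (u 1 * v 2 - u 2 * v 1), sq_nonneg (u 2 * v 0 - u 0 * v 2)]

section
variable {Γ : ℝ → ℝ → EuclideanSpace ℝ (Fin 3)} (hΓ : ContDiff ℝ 1 (Function.uncurry Γ))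
include hΓ

lemma cont_norm_cross_slice (t : ℝ) :
    Continuous fun s => ‖cross3 (partialS Γ s t) (partialT Γ s t)‖ := by
  have heq : (fun s => ‖cross3 (partialS Γ s t) (partialT Γ s t)‖)
      = fun s => Real.sqrt
        ((partialS Γ s t 1 * partialT Γ s t 2 - partialS Γ s t 2 * partialT Γ s t 1)^2
        + (partialS Γ s t 2 * partialT Γ s t 0 - partialS Γ s t 0 * partialT Γ s t 2)^2
        + (partialS Γ s t 0 * partialT Γ s t 1 - partialS Γ s t 1 * partialT Γ s t 0)^2) :=
    funext fun s => norm_cross3 _ _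
  rw [heq]
  exact Real.continuous_sqrt.comp
    ((((((contS_s hΓ t 1).mul (contT_s hΓ t 2)).sub ((contS_s hΓ t 2).mul (contT_s hΓ t 1))).pow 2).add
      ((((contS_s hΓ t 2).mul (contT_s hΓ t 0)).sub ((contS_s hΓ t 0).mul (contT_s hΓ t 2))).pow 2)).add
      ((((contS_s hΓ t 0).mul (contT_s hΓ t 1)).sub ((contS_s hΓ t 1).mul (contT_s hΓ t 0))).pow 2))

lemma D_le_inner (t : ℝ) : Dfun Γ t ≤
    ∫ s in (0:ℝ)..(2*π), ‖cross3 (partialS Γ s t) (partialT Γ s t)‖ := by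
  show (∫ s in (0:ℝ)..(2*π),
      (partialT Γ s t 0 * partialS Γ s t 1 - partialS Γ s t 0 * partialT Γ s t 1)) ≤ _
  refine integral_mono_on (μ := volume) (by positivity) ?_ ?_ ?_
  · exact (((contT_s hΓ t 0).mul (contS_s hΓ t 1)).sub
      ((contS_s hΓ t 0).mul (contT_s hΓ t 1))).intervalIntegrable _ _
  · exact (cont_norm_cross_slice hΓ t).intervalIntegrable _ _
  · intro s _
    have := cross3_lower (partialS Γ s t) (partialT Γ s t)
    have heq : partialS Γ s t 1 * partialT Γ s t 0 - partialS Γ s t 0 * partialT Γ s t 1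
        = partialT Γ s t 0 * partialS Γ s t 1 - partialS Γ s t 0 * partialT Γ s t 1 := by ring
    rw [heq] at this
    exact this

lemma D_cont : Continuous (Dfun Γ) := by
  have hc : Continuous (Function.uncurry fun (t s : ℝ) =>
      partialT Γ s t 0 * partialS Γ s t 1 - partialS Γ s t 0 * partialT Γ s t 1) :=
    (((contT_comp hΓ 0).comp (continuous_snd.prodMk continuous_fst)).mul
      ((contS_comp hΓ 1).comp (continuous_snd.prodMk continuous_fst))).sub
    (((contS_comp hΓ 0).comp (continuous_snd.prodMk continuous_fst)).mul
      ((contT_comp hΓ 1).comp (continuous_snd.prodMk continuous_fst)))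
  exact intervalIntegral.continuous_parametric_intervalIntegral_of_continuous'
    (μ := volume) hc 0 (2*π)

lemma inner_cont : Continuous fun t =>
    ∫ s in (0:ℝ)..(2*π), ‖cross3 (partialS Γ s t) (partialT Γ s t)‖ := by
  have hc : Continuous (Function.uncurry fun (t s : ℝ) =>
      ‖cross3 (partialS Γ s t) (partialT Γ s t)‖) := by
    have heq : Function.uncurry (fun (t s : ℝ) => ‖cross3 (partialS Γ s t) (partialT Γ s t)‖)
        = fun p : ℝ × ℝ => Real.sqrt
          ((partialS Γ p.2 p.1 1 * partialT Γ p.2 p.1 2 - partialS Γ p.2 p.1 2 * partialT Γ p.2 p.1 1)^2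
          + (partialS Γ p.2 p.1 2 * partialT Γ p.2 p.1 0 - partialS Γ p.2 p.1 0 * partialT Γ p.2 p.1 2)^2
          + (partialS Γ p.2 p.1 0 * partialT Γ p.2 p.1 1 - partialS Γ p.2 p.1 1 * partialT Γ p.2 p.1 0)^2) :=
      funext fun p => norm_cross3 _ _
    rw [heq]
    have cg : ∀ i : Fin 3, Continuous fun p : ℝ × ℝ => partialS Γ p.2 p.1 i :=
      fun i => (contS_comp hΓ i).comp (continuous_snd.prodMk continuous_fst)
    have ch : ∀ i : Fin 3, Continuous fun p : ℝ × ℝ => partialT Γ p.2 p.1 i :=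
      fun i => (contT_comp hΓ i).comp (continuous_snd.prodMk continuous_fst)
    exact Real.continuous_sqrt.comp ((((((cg 1).mul (ch 2)).sub ((cg 2).mul (ch 1))).pow 2).add
      ((((cg 2).mul (ch 0)).sub ((cg 0).mul (ch 2))).pow 2)).add
      ((((cg 0).mul (ch 1)).sub ((cg 1).mul (ch 0))).pow 2))
  exact intervalIntegral.continuous_parametric_intervalIntegral_of_continuous'
    (μ := volume) (f := fun (t s : ℝ) => ‖cross3 (partialS Γ s t) (partialT Γ s t)‖)
    hc 0 (2*π)

lemma A_zero (h0 : ∀ s, Γ s 0 = (WithLp.toLp 2 ![Real.cos s, Real.sin s, 0] : EuclideanSpace ℝ (Fin 3))) :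
    Afun Γ 0 = π := by
  have hx : ∀ s : ℝ, Γ s 0 0 = Real.cos s := by intro s; rw [h0 s]; rfl
  have hy : (fun x : ℝ => Γ x 0 1) = Real.sin := by
    funext x; rw [h0 x]; rfl
  have hd : ∀ s : ℝ, partialS Γ s 0 1 = Real.cos s := by
    intro s
    have h1 : HasDerivAt (fun x => Γ x 0 1) (partialS Γ s 0 1) s := hasDerivAt_S_comp hΓ s 0 1
    have h2 : HasDerivAt (fun x => Γ x 0 1) (Real.cos s) s := by
      rw [hy]; exact Real.hasDerivAt_sin s
    exact h1.unique h2
  have : Afun Γ 0 = ∫ s in (0:ℝ)..(2*π), Real.cos s ^ 2 := by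
    apply integral_congr
    intro s _
    simp only [hx, hd]
    ring
  rw [this, integral_cos_sq]
  norm_num [Real.sin_two_pi, Real.cos_two_pi]

lemma A_one (R : ℝ)
    (h1 : ∀ s, Γ s 1 = (WithLp.toLp 2 ![R * Real.cos s, R * Real.sin s, 0] : EuclideanSpace ℝ (Fin 3))) :
    Afun Γ 1 = π * R ^ 2 := by
  have hx : ∀ s : ℝ, Γ s 1 0 = R * Real.cos s := by intro s; rw [h1 s]; rfl
  have hy : (fun x : ℝ => Γ x 1 1) = fun x => R * Real.sin x := by
    funext x; rw [h1 x]; rfl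
  have hd : ∀ s : ℝ, partialS Γ s 1 1 = R * Real.cos s := by
    intro s
    have ha : HasDerivAt (fun x => Γ x 1 1) (partialS Γ s 1 1) s := hasDerivAt_S_comp hΓ s 1 1
    have hb : HasDerivAt (fun x => Γ x 1 1) (R * Real.cos s) s := by
      rw [hy]; exact (Real.hasDerivAt_sin s).const_mul R
    exact ha.unique hb
  have : Afun Γ 1 = ∫ s in (0:ℝ)..(2*π), R ^ 2 * Real.cos s ^ 2 := by
    apply integral_congr
    intro s _
    simp only [hx, hd]
    ring
  rw [this, intervalIntegral.integral_const_mul, integral_cos_sq]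
  norm_num [Real.sin_two_pi, Real.cos_two_pi]
  ring

end


/-- calibration lower bound: every `C¹` isotopy from the unit
circle to the concentric circle of radius `R ≥ 1` (with the standard
orientations) has swept area at least `π(R² − 1)`. -/
theorem sweptArea_lower_bound_circles (Γ : ℝ → ℝ → EuclideanSpace ℝ (Fin 3))
    (hΓ : ContDiff ℝ 1 (Function.uncurry Γ))
    (hper : ∀ s t, Γ (s + 2 * π) t = Γ s t)
    (R : ℝ) (hR : 1 ≤ R)
    (h0 : ∀ s, Γ s 0 = (WithLp.toLp 2 ![Real.cos s, Real.sin s, 0] : EuclideanSpace ℝ (Fin 3)))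
    (h1 : ∀ s, Γ s 1 = (WithLp.toLp 2 ![R * Real.cos s, R * Real.sin s, 0] :
      EuclideanSpace ℝ (Fin 3))) :
    π * (R ^ 2 - 1) ≤ sweptArea Γ := by
  have hAD : ∫ t in (0:ℝ)..1, Dfun Γ t = Afun Γ 1 - Afun Γ 0 :=
    intervalIntegral.integral_eq_sub_of_hasDerivAt (fun t _ => hasDerivAt_A hΓ hper t)
      ((D_cont hΓ).intervalIntegrable _ _)
  have hmono : ∫ t in (0:ℝ)..1, Dfun Γ t ≤ sweptArea Γ := by
    show _ ≤ ∫ t in (0:ℝ)..1, ∫ s in (0:ℝ)..(2 * π),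
      ‖cross3 (partialS Γ s t) (partialT Γ s t)‖
    refine intervalIntegral.integral_mono_on (μ := volume) zero_le_one
      ((D_cont hΓ).intervalIntegrable _ _)
      ((inner_cont hΓ).intervalIntegrable _ _) (fun t _ => D_le_inner hΓ t)
  have h₀ := A_zero hΓ h0
  have h₁ := A_one hΓ R h1
  calc π * (R ^ 2 - 1) = π * R ^ 2 - π := by ring
  _ = Afun Γ 1 - Afun Γ 0 := by rw [h₀, h₁]
  _ = ∫ t in (0:ℝ)..1, Dfun Γ t := hAD.symm
  _ ≤ sweptArea Γ := hmono
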